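/- The radius of convergence of the power series Σ_k (1/((D+1)k+1))·binomial((D+1)k+1, k)·z^k equals D^D/(D+1)^{D+1}. -/

import Mathlib

open Filter Finset Topology

private lemma fact_add_prod (n m : ℕ) :
    (n + m).factorial = n.factorial * ∏ j ∈ Finset.range m, (n + j + 1) := by
  induction m with
  | zero => simp
  | succ m ih =>
    rw [Finset.prod_range_succ, ← mul_assoc, ← ih, ← Nat.add_assoc, Nat.factorial_succ]
    ring

private lemma ratio_tendsto (D : ℕ) (hD : 1 ≤ D) :
    Filter.Tendsto (fun k : ℕ =>
      (∏ j ∈ Finset.range (D + 1), (((D + 1) * k + j + 1 : ℕ) : ℝ)) /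
      (((k : ℝ) + 1) * ∏ j ∈ Finset.range D, ((D * k + j + 2 : ℕ) : ℝ)))
      Filter.atTop (𝓝 (((D : ℝ) + 1) ^ (D + 1) / (D : ℝ) ^ D)) := by
  have hDpos : (0:ℝ) < (D:ℝ) ^ D := by positivity
  have hnum : Tendsto (fun k : ℕ =>
      ∏ j ∈ Finset.range (D + 1), (((D : ℝ) + 1) + ((j : ℝ) + 1) / (k : ℝ)))
      atTop (𝓝 (((D : ℝ) + 1) ^ (D + 1))) := by
    have := tendsto_finset_prod (f := fun (j : ℕ) (k : ℕ) =>
        (((D : ℝ) + 1) + ((j : ℝ) + 1) / (k : ℝ))) (x := atTop)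
        (a := fun _ => ((D : ℝ) + 1)) (Finset.range (D + 1)) (fun j _ => by
          simpa using tendsto_const_nhds.add (tendsto_const_div_atTop_nhds_zero_nat ((j:ℝ)+1)))
    simpa using this
  have hden : Tendsto (fun k : ℕ =>
      (1 + 1 / (k : ℝ)) * ∏ j ∈ Finset.range D, ((D : ℝ) + ((j : ℝ) + 2) / (k : ℝ)))
      atTop (𝓝 (1 * (D : ℝ) ^ D)) := by
    have h1 : Tendsto (fun k : ℕ => 1 + 1 / (k : ℝ)) atTop (𝓝 1) := by
      simpa using tendsto_const_nhds.add (tendsto_const_div_atTop_nhds_zero_nat (1:ℝ))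
    have h2 := tendsto_finset_prod (f := fun (j : ℕ) (k : ℕ) =>
        ((D : ℝ) + ((j : ℝ) + 2) / (k : ℝ))) (x := atTop)
        (a := fun _ => (D : ℝ)) (Finset.range D) (fun j _ => by
          simpa using tendsto_const_nhds.add (tendsto_const_div_atTop_nhds_zero_nat ((j:ℝ)+2)))
    simpa using h1.mul h2
  have hne : (1 : ℝ) * (D : ℝ) ^ D ≠ 0 := by positivity
  have hmain := hnum.div hden hne
  rw [one_mul] at hmain
  refine hmain.congr' ?_
  filter_upwards [eventually_ge_atTop 1] with k hk
  have hk0 : (k : ℝ) ≠ 0 := by positivity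
  have e1 : ∀ j ∈ Finset.range (D + 1),
      ((D : ℝ) + 1) + ((j : ℝ) + 1) / (k : ℝ) = (((D + 1) * k + j + 1 : ℕ) : ℝ) / (k : ℝ) := by
    intro j _
    push_cast
    field_simp
    ring
  have e2 : ∀ j ∈ Finset.range D,
      ((D : ℝ) + ((j : ℝ) + 2) / (k : ℝ)) = ((D * k + j + 2 : ℕ) : ℝ) / (k : ℝ) := by
    intro j _
    push_cast
    field_simp
    ring
  simp only [Pi.div_apply]
  rw [Finset.prod_congr rfl e1, Finset.prod_congr rfl e2, Finset.prod_div_distrib,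
    Finset.prod_div_distrib]
  simp only [Finset.prod_const, Finset.card_range]
  have hQ : (0:ℝ) < ∏ j ∈ Finset.range D, ((D * k + j + 2 : ℕ) : ℝ) := by
    apply Finset.prod_pos
    intro j _
    positivity
  field_simp
  ring

private lemma coeff_eq (D k : ℕ) :
    (1 / (((D + 1) * k + 1 : ℕ) : ℝ)) * ((((D + 1) * k + 1).choose k : ℕ) : ℝ) =
      (((D + 1) * k).factorial : ℝ) / ((k.factorial : ℝ) * ((D * k + 1).factorial : ℝ)) := by
  have hk : k ≤ (D + 1) * k + 1 := by nlinarith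
  have hsub : (D + 1) * k + 1 - k = D * k + 1 := by
    have : (D + 1) * k = D * k + k := by ring
    omega
  have key := Nat.choose_mul_factorial_mul_factorial hk
  rw [hsub] at key
  have key2 : ((D + 1) * k + 1).factorial = ((D + 1) * k + 1) * ((D + 1) * k).factorial :=
    Nat.factorial_succ _
  rw [key2] at key
  have keyR : ((((D + 1) * k + 1).choose k : ℕ) : ℝ) * (k.factorial : ℝ) * ((D * k + 1).factorial : ℝ)
      = (((D + 1) * k + 1 : ℕ) : ℝ) * (((D + 1) * k).factorial : ℝ) := by exact_mod_cast congrArg (Nat.cast (R := ℝ)) key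
  have h1 : (((D + 1) * k + 1 : ℕ) : ℝ) ≠ 0 := by positivity
  have h2 : (k.factorial : ℝ) ≠ 0 := by positivity
  have h3 : ((D * k + 1).factorial : ℝ) ≠ 0 := by positivity
  push_cast at keyR ⊢
  field_simp
  linarith [keyR]

private lemma ratio_eq (D k : ℕ) :
    (((D + 1) * (k + 1)).factorial : ℝ) /
        (((k + 1).factorial : ℝ) * ((D * (k + 1) + 1).factorial : ℝ)) /
      ((((D + 1) * k).factorial : ℝ) / ((k.factorial : ℝ) * ((D * k + 1).factorial : ℝ))) =
    (∏ j ∈ Finset.range (D + 1), (((D + 1) * k + j + 1 : ℕ) : ℝ)) /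
      (((k : ℝ) + 1) * ∏ j ∈ Finset.range D, ((D * k + j + 2 : ℕ) : ℝ)) := by
  have n1 : (((D + 1) * (k + 1)).factorial : ℝ) =
      (((D + 1) * k).factorial : ℝ) * ∏ j ∈ Finset.range (D + 1), (((D + 1) * k + j + 1 : ℕ) : ℝ) := by
    have h : (D + 1) * (k + 1) = (D + 1) * k + (D + 1) := by ring
    rw [h, fact_add_prod]
    push_cast
    rfl
  have n2 : ((D * (k + 1) + 1).factorial : ℝ) =
      ((D * k + 1).factorial : ℝ) * ∏ j ∈ Finset.range D, ((D * k + j + 2 : ℕ) : ℝ) := by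
    have h : D * (k + 1) + 1 = (D * k + 1) + D := by ring
    rw [h, fact_add_prod]
    push_cast
    congr 1
    exact Finset.prod_congr rfl fun x _ => by ring
  have n3 : ((k + 1).factorial : ℝ) = ((k : ℝ) + 1) * (k.factorial : ℝ) := by
    rw [Nat.factorial_succ]; push_cast; ring
  have hP : (0:ℝ) < ∏ j ∈ Finset.range (D + 1), (((D + 1) * k + j + 1 : ℕ) : ℝ) :=
    Finset.prod_pos fun j _ => by positivity
  have hQ : (0:ℝ) < ∏ j ∈ Finset.range D, ((D * k + j + 2 : ℕ) : ℝ) :=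
    Finset.prod_pos fun j _ => by positivity
  have h1 : (((D + 1) * k).factorial : ℝ) ≠ 0 := by positivity
  have h2 : (k.factorial : ℝ) ≠ 0 := by positivity
  have h3 : ((D * k + 1).factorial : ℝ) ≠ 0 := by positivity
  have h4 : ((k : ℝ) + 1) ≠ 0 := by positivity
  rw [n1, n2, n3]
  field_simp

private noncomputable def fc (D : ℕ) : ℕ → ℝ := fun k =>
  (1 / (((D + 1) * k + 1 : ℕ) : ℝ)) * ((((D + 1) * k + 1).choose k : ℕ) : ℝ)

private lemma fc_pos (D : ℕ) (k : ℕ) : 0 < fc D k := by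
  rw [fc, coeff_eq]
  positivity

private lemma fc_tendsto (D : ℕ) (hD : 1 ≤ D) (x : ℝ) (hx : x ≠ 0) :
    Filter.Tendsto (fun k : ℕ => ‖fc D (k + 1) * x ^ (k + 1)‖ / ‖fc D k * x ^ k‖)
      Filter.atTop (𝓝 (((D : ℝ) + 1) ^ (D + 1) / (D : ℝ) ^ D * |x|)) := by
  have habs : 0 < |x| := abs_pos.mpr hx
  refine ((ratio_tendsto D hD).mul_const |x|).congr fun k => ?_
  have hxk : (0:ℝ) < |x| ^ k := pow_pos habs k
  have hck : 0 < fc D k := fc_pos D k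
  have heq : ‖fc D (k + 1) * x ^ (k + 1)‖ / ‖fc D k * x ^ k‖ = fc D (k + 1) / fc D k * |x| := by
    rw [norm_mul, norm_mul, norm_pow, norm_pow, Real.norm_eq_abs, Real.norm_eq_abs,
      Real.norm_eq_abs, abs_of_pos (fc_pos D (k + 1)), abs_of_pos hck, pow_succ]
    field_simp
  rw [heq, show fc D (k + 1) / fc D k =
      (∏ j ∈ Finset.range (D + 1), (((D + 1) * k + j + 1 : ℕ) : ℝ)) /
        (((k : ℝ) + 1) * ∏ j ∈ Finset.range D, ((D * k + j + 2 : ℕ) : ℝ)) from by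
    simp only [fc]
    rw [coeff_eq, coeff_eq]
    exact ratio_eq D k]

/-- The radius of convergence of the Fuss–Catalan series
`Σ_k (1/((D+1)k+1))·C((D+1)k+1, k)·z^k` equals `z₀ = D^D/(D+1)^(D+1)`:
the series converges (absolutely) for `|x| < z₀` and diverges for `|x| > z₀`. -/
theorem melonic_gf_radius (D : ℕ) (hD : 1 ≤ D) :
    (∀ x : ℝ, |x| < (D : ℝ) ^ D / ((D : ℝ) + 1) ^ (D + 1) →
      Summable (fun k : ℕ =>
        (1 / (((D + 1) * k + 1 : ℕ) : ℝ)) * ((((D + 1) * k + 1).choose k : ℕ) : ℝ) * x ^ k)) ∧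
    (∀ x : ℝ, (D : ℝ) ^ D / ((D : ℝ) + 1) ^ (D + 1) < |x| →
      ¬ Summable (fun k : ℕ =>
        (1 / (((D + 1) * k + 1 : ℕ) : ℝ)) * ((((D + 1) * k + 1).choose k : ℕ) : ℝ) * x ^ k)) := by
  have hD' : (0:ℝ) < (D : ℝ) := by exact_mod_cast hD
  have hDD : (0:ℝ) < (D : ℝ) ^ D := by positivity
  have hDD1 : (0:ℝ) < ((D : ℝ) + 1) ^ (D + 1) := by positivity
  have hz₀pos : 0 < (D : ℝ) ^ D / ((D : ℝ) + 1) ^ (D + 1) := by positivity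
  constructor
  · intro x hx
    show Summable (fun k : ℕ => fc D k * x ^ k)
    rcases eq_or_ne x 0 with rfl | hx0
    · apply summable_of_ne_finset_zero (s := ({0} : Finset ℕ))
      intro k hk
      simp only [Finset.mem_singleton] at hk
      simp [zero_pow hk]
    · have hl1 : ((D : ℝ) + 1) ^ (D + 1) / (D : ℝ) ^ D * |x| < 1 := by
        have h1 : (0:ℝ) < ((D : ℝ) + 1) ^ (D + 1) / (D : ℝ) ^ D := by positivity
        calc ((D : ℝ) + 1) ^ (D + 1) / (D : ℝ) ^ D * |x|
            < ((D : ℝ) + 1) ^ (D + 1) / (D : ℝ) ^ D *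
              ((D : ℝ) ^ D / ((D : ℝ) + 1) ^ (D + 1)) := mul_lt_mul_of_pos_left hx h1
          _ = 1 := by field_simp
      refine summable_of_ratio_test_tendsto_lt_one hl1 ?_ (fc_tendsto D hD x hx0)
      exact Filter.Eventually.of_forall fun n =>
        mul_ne_zero (ne_of_gt (fc_pos D n)) (pow_ne_zero n hx0)
  · intro x hx
    show ¬ Summable (fun k : ℕ => fc D k * x ^ k)
    have hx0 : x ≠ 0 := by
      intro h
      rw [h, abs_zero] at hx
      linarith
    have hl : 1 < ((D : ℝ) + 1) ^ (D + 1) / (D : ℝ) ^ D * |x| := by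
      have h1 : (0:ℝ) < ((D : ℝ) + 1) ^ (D + 1) / (D : ℝ) ^ D := by positivity
      calc (1:ℝ) = ((D : ℝ) + 1) ^ (D + 1) / (D : ℝ) ^ D *
              ((D : ℝ) ^ D / ((D : ℝ) + 1) ^ (D + 1)) := by field_simp
        _ < ((D : ℝ) + 1) ^ (D + 1) / (D : ℝ) ^ D * |x| := mul_lt_mul_of_pos_left hx h1
    exact not_summable_of_ratio_test_tendsto_gt_one hl (fc_tendsto D hD x hx0)
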